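/- Let r ≥ 1 and b ≥ 2 be integers with b squarefree, and let θ be a root of the irreducible trinomial P(X) = X³ + 3rbX − b ∈ ℤ[X]. Let x, y, z ∈ ℤ and set φ = x + yθ + zθ². If b² divides the norm N_{L/ℚ}(φ), then b divides x, b divides y, and z³ ≡ N_{L/ℚ}(φ)/b² (mod b). -/

import Mathlib

open NumberField Polynomial

/-- Let `r ≥ 1`, `b ≥ 2` squarefree, and `θ` a root of the irreducible trinomial
`P(X) = X³ + 3rbX − b ∈ ℤ[X]` generating `L = ℚ(θ)`. Let `x, y, z ∈ ℤ`,
`φ = x + yθ + zθ²`, and let `N ∈ ℤ` be the norm `N_{L/ℚ}(φ)`. If `b² ∣ N`, then `b ∣ x`,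
`b ∣ y`, and `z³ ≡ N / b² (mod b)`. -/
theorem cubic_trinomial_norm_divisibility
    (r b : ℤ) (hr : 1 ≤ r) (hb : 2 ≤ b) (hsf : Squarefree b)
    (L : Type*) [Field L] [NumberField L] (θ : L)
    (hroot : θ ^ 3 + ((3 * r * b : ℤ) : L) * θ - (b : L) = 0)
    (hirr : Irreducible
      ((X ^ 3 + C (3 * r * b) * X - C b : Polynomial ℤ).map (Int.castRingHom ℚ)))
    (hgen : IntermediateField.adjoin ℚ {θ} = ⊤)
    (x y z : ℤ) (N : ℤ)
    (hN : (N : ℚ) = Algebra.norm ℚ ((x : L) + (y : L) * θ + (z : L) * θ ^ 2))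
    (hdvd : b ^ 2 ∣ N) :
    b ∣ x ∧ b ∣ y ∧ z ^ 3 ≡ N / b ^ 2 [ZMOD b] := by
  have hb0 : (b : ℤ) ≠ 0 := by omega
  -- the minimal polynomial of θ
  set Q : Polynomial ℚ :=
    (X ^ 3 + C (3 * r * b) * X - C b : Polynomial ℤ).map (Int.castRingHom ℚ) with hQ
  have hQexp : Q = X ^ 3 + C ((3 * r * b : ℤ) : ℚ) * X - C ((b : ℤ) : ℚ) := by
    simp only [hQ, Polynomial.map_sub, Polynomial.map_add, Polynomial.map_pow,
      Polynomial.map_mul, Polynomial.map_X, Polynomial.map_C, Int.coe_castRingHom]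
  have hQmonic : Q.Monic := by
    rw [hQexp]; monicity!
  have haev : Polynomial.aeval θ Q = 0 := by
    rw [hQexp]
    simp only [map_sub, map_add, map_pow, map_mul, aeval_X, aeval_C]
    rw [map_intCast, map_intCast]
    exact_mod_cast hroot
  have hmin : minpoly ℚ θ = Q :=
    (minpoly.eq_of_irreducible_of_monic hirr haev hQmonic).symm
  have hQdeg : Q.natDegree = 3 := by
    rw [hQexp]; compute_degree!
  have hint : IsIntegral ℚ θ := ⟨Q, hQmonic, by rwa [← Polynomial.aeval_def]⟩
  have hdegmin : (minpoly ℚ θ).natDegree = 3 := by rw [hmin, hQdeg]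
  have hfinrank : Module.finrank ℚ L = 3 := by
    have h1 := IntermediateField.adjoin.finrank hint
    rw [hgen, IntermediateField.finrank_top'] at h1
    rw [h1, hdegmin]
  -- linear independence of 1, θ, θ²
  have li : LinearIndependent ℚ fun i : Fin 3 => θ ^ (i : ℕ) := by
    have := linearIndependent_pow (K := ℚ) θ
    rwa [hdegmin] at this
  set B : Module.Basis (Fin 3) ℚ L :=
    basisOfLinearIndependentOfCardEqFinrank li (by simp [hfinrank]) with hB
  have hBi : ∀ i : Fin 3, B i = θ ^ (i : ℕ) := fun i => by
    rw [hB, coe_basisOfLinearIndependentOfCardEqFinrank]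
  set s : ℤ := 3 * r * b with hs
  -- the multiplication matrix
  set M : Matrix (Fin 3) (Fin 3) ℚ :=
    !![((x : ℤ) : ℚ), ((z * b : ℤ) : ℚ), ((y * b : ℤ) : ℚ);
       ((y : ℤ) : ℚ), ((x - z * s : ℤ) : ℚ), ((z * b - y * s : ℤ) : ℚ);
       ((z : ℤ) : ℚ), ((y : ℤ) : ℚ), ((x - z * s : ℤ) : ℚ)] with hM
  set φ : L := (x : L) + (y : L) * θ + (z : L) * θ ^ 2 with hφ
  have hsm : ∀ (a : ℤ) (v : L), ((a : ℤ) : ℚ) • v = ((a : ℤ) : L) * v := fun a v => by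
    rw [Algebra.smul_def, map_intCast]
  have key : ∀ j : Fin 3, φ * B j = ∑ i : Fin 3, M i j • B i := by
    have k0 : φ * B 0 = ∑ i : Fin 3, M i 0 • B i := by
      simp only [Fin.sum_univ_three, hBi, Fin.val_zero, Fin.val_one, Fin.val_two, pow_zero, pow_one]
      rw [show M 0 0 = ((x : ℤ) : ℚ) from rfl, show M 1 0 = ((y : ℤ) : ℚ) from rfl,
        show M 2 0 = ((z : ℤ) : ℚ) from rfl]
      simp only [hsm, hφ]
      norm_num
    have k1 : φ * B 1 = ∑ i : Fin 3, M i 1 • B i := by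
      simp only [Fin.sum_univ_three, hBi, Fin.val_zero, Fin.val_one, Fin.val_two, pow_zero, pow_one]
      rw [show M 0 1 = ((z * b : ℤ) : ℚ) from rfl, show M 1 1 = ((x - z * s : ℤ) : ℚ) from rfl,
        show M 2 1 = ((y : ℤ) : ℚ) from rfl]
      simp only [hsm, hφ]
      push_cast
      linear_combination ((z : L)) * hroot
    have k2 : φ * B 2 = ∑ i : Fin 3, M i 2 • B i := by
      simp only [Fin.sum_univ_three, hBi, Fin.val_zero, Fin.val_one, Fin.val_two, pow_zero, pow_one]
      rw [show M 0 2 = ((y * b : ℤ) : ℚ) from rfl, show M 1 2 = ((z * b - y * s : ℤ) : ℚ) from rfl,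
        show M 2 2 = ((x - z * s : ℤ) : ℚ) from rfl]
      simp only [hsm, hφ]
      push_cast
      linear_combination ((y : L) + (z : L) * θ) * hroot
    intro j
    fin_cases j
    · exact k0
    · exact k1
    · exact k2
  have hLM : Algebra.leftMulMatrix B φ = M := by
    ext i j
    rw [Algebra.leftMulMatrix_eq_repr_mul, key j, B.repr_sum_self]
  -- the explicit norm value
  set F : ℤ := x ^ 3 + b * y ^ 3 + b ^ 2 * z ^ 3 - 3 * b * x * y * z
      + s * (x * y ^ 2 - 2 * x ^ 2 * z) + s ^ 2 * x * z ^ 2 + s * b * y * z ^ 2 with hF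
  have hNF : N = F := by
    have h1 : (N : ℚ) = (Algebra.leftMulMatrix B φ).det := by
      rw [hN]; exact Algebra.norm_eq_matrix_det B φ
    rw [hLM, hM, Matrix.det_fin_three] at h1
    have h2 : (N : ℚ) = ((F : ℤ) : ℚ) := by
      rw [h1, hF]
      norm_num [Matrix.cons_val_zero, Matrix.cons_val_one, Matrix.head_cons,
        Matrix.cons_val_two, Matrix.tail_cons]
      push_cast
      ring
    exact_mod_cast h2
  -- now pure integer arithmetic
  have hbF : b ^ 2 ∣ F := hNF ▸ hdvd
  have hbx : b ∣ x := by
    rw [← hsf.dvd_pow_iff_dvd (n := 3) (by norm_num)]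
    have h3 : x ^ 3 = F - b * (y ^ 3 + b * z ^ 3 - 3 * x * y * z
        + 3 * r * (x * y ^ 2 - 2 * x ^ 2 * z) + 9 * r ^ 2 * b * x * z ^ 2
        + 3 * r * b * y * z ^ 2) := by rw [hF, hs]; ring
    rw [h3]
    exact dvd_sub (dvd_trans (dvd_pow_self b two_ne_zero) hbF) (dvd_mul_right _ _)
  obtain ⟨x', hx'⟩ := hbx
  have hby : b ∣ y := by
    rw [← hsf.dvd_pow_iff_dvd (n := 3) (by norm_num)]
    set c2 : ℤ := b * x' ^ 3 + z ^ 3 - 3 * x' * y * z + 3 * r * x' * y ^ 2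
        - 6 * r * b * x' ^ 2 * z + 9 * r ^ 2 * b * x' * z ^ 2 + 3 * r * y * z ^ 2 with hc2
    have h4 : F = b * y ^ 3 + b ^ 2 * c2 := by rw [hF, hs, hx', hc2]; ring
    obtain ⟨k, hk⟩ := hbF
    have h5 : b * y ^ 3 = b * (b * (k - c2)) := by
      have : b ^ 2 * k = b * y ^ 3 + b ^ 2 * c2 := by rw [← hk, h4]
      ring_nf
      ring_nf at this
      linarith
    have h6 : y ^ 3 = b * (k - c2) := mul_left_cancel₀ hb0 h5
    exact ⟨_, h6⟩
  obtain ⟨y', hy'⟩ := hby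
  refine ⟨⟨x', hx'⟩, ⟨y', hy'⟩, ?_⟩
  set c3 : ℤ := x' ^ 3 + b * y' ^ 3 - 3 * x' * y' * z + 3 * r * b * x' * y' ^ 2
      - 6 * r * x' ^ 2 * z + 9 * r ^ 2 * x' * z ^ 2 + 3 * r * y' * z ^ 2 with hc3
  have h7 : F = b ^ 2 * (z ^ 3 + b * c3) := by rw [hF, hs, hx', hy', hc3]; ring
  have h8 : N / b ^ 2 = z ^ 3 + b * c3 := by
    rw [hNF, h7]
    exact Int.mul_ediv_cancel_left _ (pow_ne_zero 2 hb0)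
  rw [h8]
  exact Int.ModEq.symm (Int.modEq_iff_dvd.mpr ⟨-c3, by ring⟩)
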